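/- arXiv:1811.05682 — 3 statements merged into one kernel-verified Lean document; each statement's English description precedes it below -/
import Mathlib

section
/- In the algebra with generators φ, y₁, y₂ and relations φy₁ = y₁φ, φy₂ = y₂φ + h'y₂², y₁y₂ = y₂y₁, φ² = h'y₂φ (h' even central, real: h̄' = h'), the conjugate-linear anti-multiplicative map determined by φ⋆ = φ - h'y₂, y₁⋆ = -y₁, y₂⋆ = -y₂ preserves the defining ideal and squares to the identity, making O(A_{h'}^{2|1}) a ⋆-algebra. -/
open FreeAlgebra MulOpposite

noncomputable section StarAux

variable (h' : ℝ)

abbrev Fr := FreeAlgebra ℂ (Fin 3)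

/-- images of the generators -/
def svals : Fin 3 → Fr :=
  ![FreeAlgebra.ι ℂ 0 - (h' : ℂ) • FreeAlgebra.ι ℂ 2, -FreeAlgebra.ι ℂ 1, -FreeAlgebra.ι ℂ 2]

lemma Sop_comm (c : ℂ) (g : FreeMonoid (Fin 3)) :
    Commute (((algebraMap ℂ Frᵐᵒᵖ).comp (starRingEnd ℂ)) c)
      ((FreeMonoid.lift (fun x => op (svals h' x))) g) := by
  rw [RingHom.comp_apply]
  exact Algebra.commute_algebraMap_left _ _

/-- the conjugate-linear anti-hom, as a ring hom into the opposite algebra -/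
def Sop : Fr →+* Frᵐᵒᵖ :=
  (MonoidAlgebra.liftNCRingHom
    ((algebraMap ℂ Frᵐᵒᵖ).comp (starRingEnd ℂ))
    (FreeMonoid.lift (fun x => op (svals h' x)))
    (Sop_comm h')).comp
    (FreeAlgebra.equivMonoidAlgebraFreeMonoid (R := ℂ) (X := Fin 3)).toAlgHom.toRingHom

def sFun : Fr → Fr := fun a => unop (Sop h' a)

lemma sFun_add (a b : Fr) : sFun h' (a + b) = sFun h' a + sFun h' b := by
  simp [sFun, map_add]

lemma sFun_mul (a b : Fr) : sFun h' (a * b) = sFun h' b * sFun h' a := by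
  simp [sFun, map_mul]

lemma sFun_zero : sFun h' 0 = 0 := by simp [sFun, map_zero]

lemma sFun_algebraMap (c : ℂ) :
    sFun h' (algebraMap ℂ Fr c) = algebraMap ℂ Fr ((starRingEnd ℂ) c) := by
  unfold sFun Sop
  rw [RingHom.comp_apply,
    show ((FreeAlgebra.equivMonoidAlgebraFreeMonoid (R := ℂ) (X := Fin 3)).toAlgHom.toRingHom)
      (algebraMap ℂ Fr c) = algebraMap ℂ _ c from AlgEquiv.commutes _ c]
  simp [MonoidAlgebra.coe_algebraMap, MonoidAlgebra.liftNCRingHom,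
    MonoidAlgebra.liftNC_single]

lemma sFun_ι (x : Fin 3) : sFun h' (FreeAlgebra.ι ℂ x) = svals h' x := by
  simp [sFun, Sop, MonoidAlgebra.liftNCRingHom, FreeAlgebra.equivMonoidAlgebraFreeMonoid,
    FreeAlgebra.lift_ι_apply, MonoidAlgebra.liftNC_single, MonoidAlgebra.of_apply]

lemma sFun_smul (c : ℂ) (a : Fr) :
    sFun h' (c • a) = (starRingEnd ℂ) c • sFun h' a := by
  rw [Algebra.smul_def, sFun_mul, sFun_algebraMap, Algebra.smul_def,
    ← Algebra.commutes]

lemma sFun_neg (a : Fr) : sFun h' (-a) = -(sFun h' a) := by simp [sFun, map_neg]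

lemma sFun_sub (a b : Fr) : sFun h' (a - b) = sFun h' a - sFun h' b := by
  simp [sFun, map_sub]

end StarAux

/-- For real `h'`, the conjugate-linear anti-multiplicative map determined by
`φ ↦ φ - h'y₂`, `y₁ ↦ -y₁`, `y₂ ↦ -y₂` preserves the defining ideal of
`O(A_{h'}^{2|1})` and squares to the identity, so `O(A_{h'}^{2|1})` is a ⋆-algebra. -/
theorem star_structure_on_Ahp21 (h' : ℝ) :
    let F := FreeAlgebra ℂ (Fin 3)
    let φ : F := FreeAlgebra.ι ℂ 0
    let y₁ : F := FreeAlgebra.ι ℂ 1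
    let y₂ : F := FreeAlgebra.ι ℂ 2
    let J : TwoSidedIdeal F := TwoSidedIdeal.span
      {φ * y₁ - y₁ * φ, φ * y₂ - y₂ * φ - (h' : ℂ) • (y₂ * y₂),
       y₁ * y₂ - y₂ * y₁, φ * φ - (h' : ℂ) • (y₂ * φ)}
    ∃ s : F → F,
      (∀ a b : F, s (a + b) = s a + s b) ∧
      (∀ (c : ℂ) (a : F), s (c • a) = (starRingEnd ℂ) c • s a) ∧
      (∀ a b : F, s (a * b) = s b * s a) ∧
      s φ = φ - (h' : ℂ) • y₂ ∧ s y₁ = -y₁ ∧ s y₂ = -y₂ ∧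
      (∀ a ∈ J, s a ∈ J) ∧
      (∀ a : F, s (s a) = a) := by
  intro F φ y₁ y₂ J
  refine ⟨sFun h', sFun_add h', sFun_smul h', sFun_mul h', ?_, ?_, ?_, ?_, ?_⟩
  · simpa [svals] using sFun_ι h' 0
  · simpa [svals] using sFun_ι h' 1
  · simpa [svals] using sFun_ι h' 2
  · -- ideal preservation
    have hφ : sFun h' φ = φ - (h' : ℂ) • y₂ := by simpa [svals] using sFun_ι h' 0
    have hy₁ : sFun h' y₁ = -y₁ := by simpa [svals] using sFun_ι h' 1
    have hy₂ : sFun h' y₂ = -y₂ := by simpa [svals] using sFun_ι h' 2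
    have hch : (starRingEnd ℂ) (h' : ℂ) = (h' : ℂ) := Complex.conj_ofReal h'
    set g₁ : F := φ * y₁ - y₁ * φ with hg₁
    set g₂ : F := φ * y₂ - y₂ * φ - (h' : ℂ) • (y₂ * y₂) with hg₂
    set g₃ : F := y₁ * y₂ - y₂ * y₁ with hg₃
    set g₄ : F := φ * φ - (h' : ℂ) • (y₂ * φ) with hg₄
    have m₁ : g₁ ∈ J := TwoSidedIdeal.subset_span (by left; rfl)
    have m₂ : g₂ ∈ J := TwoSidedIdeal.subset_span (by right; left; rfl)
    have m₃ : g₃ ∈ J := TwoSidedIdeal.subset_span (by right; right; left; rfl)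
    have m₄ : g₄ ∈ J := TwoSidedIdeal.subset_span (by right; right; right; rfl)
    intro a ha
    let K : TwoSidedIdeal F := TwoSidedIdeal.mk' {a | sFun h' a ∈ J}
      (show sFun h' 0 ∈ J by rw [sFun_zero]; exact J.zero_mem)
      (fun {x y} hx hy => show sFun h' (x + y) ∈ J by
        rw [sFun_add]; exact J.add_mem hx hy)
      (fun {x} hx => show sFun h' (-x) ∈ J by rw [sFun_neg]; exact J.neg_mem hx)
      (fun {x y} hy => show sFun h' (x * y) ∈ J by
        rw [sFun_mul]; exact J.mul_mem_right _ _ hy)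
      (fun {x y} hx => show sFun h' (x * y) ∈ J by
        rw [sFun_mul]; exact J.mul_mem_left _ _ hx)
    have key : a ∈ K := by
      rw [TwoSidedIdeal.mem_span_iff] at ha
      refine ha K ?_
      intro z hz
      rw [SetLike.mem_coe, TwoSidedIdeal.mem_mk', Set.mem_setOf_eq]
      rcases hz with h | h | h | h
      · -- g₁ ↦ g₁ + h' • g₃
        subst h
        have : sFun h' g₁ = g₁ + (h' : ℂ) • g₃ := by
          rw [hg₁, sFun_sub, sFun_mul, sFun_mul, hφ, hy₁, hg₃]
          simp only [mul_sub, sub_mul, neg_mul, mul_neg, neg_neg, mul_smul_comm,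
            smul_mul_assoc, smul_sub, neg_sub]
          module
        rw [this]
        refine J.add_mem m₁ ?_
        rw [Algebra.smul_def]
        exact J.mul_mem_left _ _ m₃
      · -- g₂ ↦ g₂
        subst h
        have : sFun h' g₂ = g₂ := by
          rw [hg₂, sFun_sub, sFun_sub, sFun_mul, sFun_mul, sFun_smul, sFun_mul,
            hφ, hy₂, hch]
          simp only [mul_sub, sub_mul, neg_mul, mul_neg, neg_neg, mul_smul_comm,
            smul_mul_assoc, smul_sub, neg_sub, smul_neg]
          module
        rw [this]; exact m₂
      · -- g₃ ↦ -g₃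
        subst h
        have : sFun h' g₃ = -g₃ := by
          rw [hg₃, sFun_sub, sFun_mul, sFun_mul, hy₁, hy₂]
          simp only [neg_mul, mul_neg, neg_neg, neg_sub]
        rw [this]; exact J.neg_mem m₃
      · -- g₄ ↦ g₄
        subst h
        have : sFun h' g₄ = g₄ := by
          rw [hg₄, sFun_sub, sFun_mul, sFun_smul, sFun_mul, hφ, hy₂, hch]
          simp only [mul_sub, sub_mul, neg_mul, mul_neg, neg_neg, mul_smul_comm,
            smul_mul_assoc, smul_sub, neg_sub, smul_neg, smul_smul]
          module
        rw [this]; exact m₄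
    simpa [K, TwoSidedIdeal.mem_mk', Set.mem_setOf_eq] using key
  · -- involutive
    have hφ : sFun h' φ = φ - (h' : ℂ) • y₂ := by simpa [svals] using sFun_ι h' 0
    have hy₁ : sFun h' y₁ = -y₁ := by simpa [svals] using sFun_ι h' 1
    have hy₂ : sFun h' y₂ = -y₂ := by simpa [svals] using sFun_ι h' 2
    have hch : (starRingEnd ℂ) (h' : ℂ) = (h' : ℂ) := Complex.conj_ofReal h'
    intro a
    refine FreeAlgebra.induction (R := ℂ) (X := Fin 3) (motive := fun a => sFun h' (sFun h' a) = a) ?_ ?_ ?_ ?_ a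
    · intro r
      rw [sFun_algebraMap, sFun_algebraMap]
      simp
    · intro x
      fin_cases x
      · show sFun h' (sFun h' φ) = φ
        rw [hφ, sFun_sub, sFun_smul, hφ, hy₂, hch]
        simp
      · show sFun h' (sFun h' y₁) = y₁
        rw [hy₁, sFun_neg, hy₁]; simp
      · show sFun h' (sFun h' y₂) = y₂
        rw [hy₂, sFun_neg, hy₂]; simp
    · intro x y hx hy
      rw [sFun_mul, sFun_mul, hx, hy]
    · intro x y hx hy
      rw [sFun_add, sFun_add, hx, hy]
end

section
/- Define in the Lie superalgebra L (generated by even u and odd ξ₁, ξ₂ with [u,ξ_k] = iℏ_k ξ_k and {ξ_j, ξ_k} = 0) the elements X = e^u and Θ_k = e^{ku}ξ_k in any associative algebra representation where these exponentials make sense. Then X, Θ₁, Θ₂ satisfy the quantum superspace relations XΘ₁ = qΘ₁X, XΘ₂ = pΘ₂X, Θ₁Θ₂ = -pq⁻²Θ₂Θ₁, Θ_k² = 0, where q = e^{iℏ₁}, p = e^{iℏ₂}. -/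
open Complex

/-- If `E = e^u` satisfies `Eξₖ = e^{iℏₖ}ξₖE` (as follows from `[u,ξₖ] = iℏₖξₖ`),
and `ξ₁, ξ₂` anticommute and square to zero, then `X = E`, `Θ₁ = Eξ₁`, `Θ₂ = E²ξ₂`
satisfy the quantum superspace relations `XΘ₁ = qΘ₁X`, `XΘ₂ = pΘ₂X`,
`Θ₁Θ₂ = -pq⁻²Θ₂Θ₁`, `Θₖ² = 0`, where `q = e^{iℏ₁}`, `p = e^{iℏ₂}`. -/
theorem superspace_from_Lie_superalgebra
    (A : Type*) [Ring A] [Algebra ℂ A] (ℏ₁ ℏ₂ : ℝ) (E ξ₁ ξ₂ : A)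
    (hE1 : E * ξ₁ = Complex.exp (Complex.I * ℏ₁) • (ξ₁ * E))
    (hE2 : E * ξ₂ = Complex.exp (Complex.I * ℏ₂) • (ξ₂ * E))
    (hanti : ξ₁ * ξ₂ + ξ₂ * ξ₁ = 0)
    (hsq1 : ξ₁ * ξ₁ = 0) (hsq2 : ξ₂ * ξ₂ = 0) :
    let q : ℂ := Complex.exp (Complex.I * ℏ₁)
    let p : ℂ := Complex.exp (Complex.I * ℏ₂)
    let X : A := E
    let Θ₁ : A := E * ξ₁
    let Θ₂ : A := E ^ 2 * ξ₂
    X * Θ₁ = q • (Θ₁ * X) ∧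
    X * Θ₂ = p • (Θ₂ * X) ∧
    Θ₁ * Θ₂ = (-(p * q⁻¹ ^ 2)) • (Θ₂ * Θ₁) ∧
    Θ₁ * Θ₁ = 0 ∧ Θ₂ * Θ₂ = 0 := by
  intro q p X Θ₁ Θ₂
  have hq : q ≠ 0 := Complex.exp_ne_zero _
  have hp : p ≠ 0 := Complex.exp_ne_zero _
  have h1 : ξ₁ * E = q⁻¹ • (E * ξ₁) := by
    rw [hE1, smul_smul, inv_mul_cancel₀ hq, one_smul]
  have h2 : ξ₂ * E = p⁻¹ • (E * ξ₂) := by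
    rw [hE2, smul_smul, inv_mul_cancel₀ hp, one_smul]
  have hantis : ξ₁ * ξ₂ = -(ξ₂ * ξ₁) := eq_neg_of_add_eq_zero_left hanti
  refine ⟨?_, ?_, ?_, ?_, ?_⟩
  · show E * (E * ξ₁) = q • (E * ξ₁ * E)
    conv_lhs => rw [hE1]
    rw [mul_smul_comm, ← mul_assoc]
  · show E * (E ^ 2 * ξ₂) = p • (E ^ 2 * ξ₂ * E)
    calc E * (E ^ 2 * ξ₂) = E ^ 2 * (E * ξ₂) := by noncomm_ring
    _ = E ^ 2 * (p • (ξ₂ * E)) := by rw [hE2]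
    _ = p • (E ^ 2 * ξ₂ * E) := by rw [mul_smul_comm, ← mul_assoc]
  · show (E * ξ₁) * (E ^ 2 * ξ₂) = (-(p * q⁻¹ ^ 2)) • (E ^ 2 * ξ₂ * (E * ξ₁))
    have key : ξ₁ * E ^ 2 = (q⁻¹ ^ 2) • (E ^ 2 * ξ₁) := by
      rw [pow_two, ← mul_assoc, h1, smul_mul_assoc, mul_assoc, h1, mul_smul_comm,
        smul_smul, ← mul_assoc, ← pow_two, ← pow_two]
    have rhs : E ^ 2 * ξ₂ * (E * ξ₁) = p⁻¹ • (E * E ^ 2 * (ξ₂ * ξ₁)) := by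
      have h : E ^ 2 * ξ₂ * (E * ξ₁) = E ^ 2 * (ξ₂ * E) * ξ₁ := by noncomm_ring
      rw [h, h2, mul_smul_comm, smul_mul_assoc]
      congr 1
      noncomm_ring
    calc (E * ξ₁) * (E ^ 2 * ξ₂) = E * (ξ₁ * E ^ 2) * ξ₂ := by noncomm_ring
    _ = (q⁻¹ ^ 2) • (E * E ^ 2 * (ξ₁ * ξ₂)) := by
        rw [key, mul_smul_comm, smul_mul_assoc]; congr 1; noncomm_ring
    _ = (-(q⁻¹ ^ 2)) • (E * E ^ 2 * (ξ₂ * ξ₁)) := by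
        rw [hantis, mul_neg, smul_neg, neg_smul]
    _ = (-(p * q⁻¹ ^ 2)) • (p⁻¹ • (E * E ^ 2 * (ξ₂ * ξ₁))) := by
        rw [smul_smul]; congr 1; field_simp
    _ = (-(p * q⁻¹ ^ 2)) • (E ^ 2 * ξ₂ * (E * ξ₁)) := by rw [rhs]
  · show (E * ξ₁) * (E * ξ₁) = 0
    calc (E * ξ₁) * (E * ξ₁) = E * (ξ₁ * E) * ξ₁ := by noncomm_ring
    _ = q⁻¹ • (E * E * (ξ₁ * ξ₁)) := by
        rw [h1, mul_smul_comm, smul_mul_assoc]; congr 1; noncomm_ring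
    _ = 0 := by rw [hsq1, mul_zero, smul_zero]
  · show (E ^ 2 * ξ₂) * (E ^ 2 * ξ₂) = 0
    have key : ξ₂ * E ^ 2 = (p⁻¹ ^ 2) • (E ^ 2 * ξ₂) := by
      rw [pow_two, ← mul_assoc, h2, smul_mul_assoc, mul_assoc, h2, mul_smul_comm,
        smul_smul, ← mul_assoc, ← pow_two, ← pow_two]
    calc (E ^ 2 * ξ₂) * (E ^ 2 * ξ₂) = E ^ 2 * (ξ₂ * E ^ 2) * ξ₂ := by noncomm_ring
    _ = (p⁻¹ ^ 2) • (E ^ 2 * E ^ 2 * (ξ₂ * ξ₂)) := by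
        rw [key, mul_smul_comm, smul_mul_assoc]; congr 1; noncomm_ring
    _ = 0 := by rw [hsq2, mul_zero, smul_zero]
end

section
/- In the free superalgebra modulo the (h,h')-Manin relations of O(M_{h,h'}(1|2)), the left coaction δ_L(x_i) = Σ_k t_{ik} ⊗ x_k preserves the defining relation xθ₁ = θ₁x of O(A_h^{1|2}): if the matrix entries t_{ij} satisfy the relations (5.1) and supercommute appropriately with x, θ₁, θ₂ satisfying xθ₁ = θ₁x, xθ₂ = θ₂x + hx², θ₁θ₂ = -θ₂θ₁, θ₁² = 0, θ₂² = -hθ₂x, then the elements x' = ax + αθ₁ + βθ₂, θ₁' = γx + bθ₁ + cθ₂, θ₂' = δx + dθ₁ + eθ₂ again satisfy x'θ₁' = θ₁'x'. -/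
/-- The left coaction of `O(M_{h,h'}(1|2))` preserves the relation `xθ₁ = θ₁x`:
if the entries of the quantum supermatrix satisfy the relations (5.1) and
supercommute with the coordinates of the `h`-superspace, then the transformed
coordinates `x' = ax + αθ₁ + βθ₂`, `θ₁' = γx + bθ₁ + cθ₂` satisfy `x'θ₁' = θ₁'x'`. -/
theorem coaction_preserves_x_theta1
    (K : Type*) [Field K] [CharZero K] (A : Type*) [Ring A] [Algebra K A]
    (h h' : K) (x θ₁ θ₂ a b c d e α β γ δ : A)
    -- h-superspace relations
    (r1 : x * θ₁ = θ₁ * x) (r2 : x * θ₂ = θ₂ * x + h • (x ^ 2))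
    (r3 : θ₁ * θ₂ = -(θ₂ * θ₁)) (r4 : θ₁ ^ 2 = 0) (r5 : θ₂ ^ 2 = -(h • (θ₂ * x)))
    -- even matrix entries commute with x, θ₁, θ₂
    (ca1 : a * x = x * a) (ca2 : a * θ₁ = θ₁ * a) (ca3 : a * θ₂ = θ₂ * a)
    (cb1 : b * x = x * b) (cb2 : b * θ₁ = θ₁ * b) (cb3 : b * θ₂ = θ₂ * b)
    (cc1 : c * x = x * c) (cc2 : c * θ₁ = θ₁ * c) (cc3 : c * θ₂ = θ₂ * c)
    (cd1 : d * x = x * d) (cd2 : d * θ₁ = θ₁ * d) (cd3 : d * θ₂ = θ₂ * d)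
    (ce1 : e * x = x * e) (ce2 : e * θ₁ = θ₁ * e) (ce3 : e * θ₂ = θ₂ * e)
    -- odd matrix entries commute with x and anticommute with θ₁, θ₂
    (cα1 : α * x = x * α) (cα2 : α * θ₁ = -(θ₁ * α)) (cα3 : α * θ₂ = -(θ₂ * α))
    (cβ1 : β * x = x * β) (cβ2 : β * θ₁ = -(θ₁ * β)) (cβ3 : β * θ₂ = -(θ₂ * β))
    (cγ1 : γ * x = x * γ) (cγ2 : γ * θ₁ = -(θ₁ * γ)) (cγ3 : γ * θ₂ = -(θ₂ * γ))
    (cδ1 : δ * x = x * δ) (cδ2 : δ * θ₁ = -(θ₁ * δ)) (cδ3 : δ * θ₂ = -(θ₂ * δ))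
    -- the relations (5.1)
    (m1 : a * α = (1 + h * h') • (α * a) - h' • (α * δ + d * a))
    (m2 : a * β = β * a + h' • (a ^ 2 - e * a - β * δ) - h • (β ^ 2))
    (m3 : a * γ = (1 + h * h') • (γ * a) + h • (γ * β - c * a))
    (m4 : a * c = c * a - h • (c * β) - h' • (γ * a) + (h * h') • (γ * β))
    (m5 : a * δ = δ * a + h • (a ^ 2 - e * a + δ * β) + h' • (δ ^ 2))
    (m6 : a * d = d * a + h • (α * a) + h' • (d * δ) - (h * h') • (α * δ))
    (m7 : a * e = e * a + h • (β * (a - e)) + h' • ((e - a) * δ))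
    (m8 : α * β = -((1 + h * h') • (β * α)) + h' • (β * d + e * α))
    (m9 : α * γ = -(γ * α))
    (m10 : α * c = c * α)
    (m11 : α * δ = -(δ * α) - h • (a * α) + h' • (δ * d) - (h * h') • (a * d))
    (m12 : α * d = d * α + h' • (d ^ 2))
    (m13 : α * e = e * α + h • (β * α) + h' • (e * d) - (h * h') • (d * β))
    (m14 : β * γ = -(γ * β) + h • (c * β) - h' • (γ * a) - (h * h') • (c * a))
    (m15 : β * c = (1 - h * h') • (c * β) - h' • (γ * β + c * a))
    (m16 : β * δ = -(δ * β) + (h • β + h' • δ) * (e - a))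
    (m17 : β * d = d * β + h • (α * β) + h' • (d * e) - (h * h') • (e * α))
    (m18 : β * e = e * β + h' • (e ^ 2 - e * a - δ * β) - h • (β ^ 2))
    (m19 : γ * c = c * γ + h • (c ^ 2))
    (m20 : γ * δ = -((1 + h * h') • (δ * γ)) + h • (e * γ + δ * c))
    (m21 : γ * d = d * γ)
    (m22 : γ * e = e * γ + h • (e * c) - h' • (δ * γ) - (h * h') • (c * δ))
    (m23 : c * δ = δ * c - h • (e * c) - h' • (δ * γ) - (h * h') • (γ * e))
    (m24 : c * d = d * c)
    (m25 : c * e = (1 - h * h') • (e * c) + h' • (e * γ - δ * c))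
    (m26 : δ * d = (1 - h * h') • (d * δ) + h • (α * δ - d * a))
    (m27 : δ * e = e * δ + h • (e ^ 2 - e * a + β * δ) + h' • (δ ^ 2))
    (m28 : d * e = (1 - h * h') • (e * d) + h • (β * d - e * α))
    (m29 : α ^ 2 = h' • (α * d))
    (m30 : β ^ 2 = h' • (β * (e - a)))
    (m31 : γ ^ 2 = h • (γ * c))
    (m32 : δ ^ 2 = h • (δ * (e - a)))
    (m33 : ∀ t ∈ ({a, c, d, e, α, β, γ, δ} : Set A), b * t = t * b)
    (m34 : a * (h • β + h' • δ) = (h • β + h' • δ) * a)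
    (m35 : e * (h • β + h' • δ) = (h • β + h' • δ) * e) :
    (a * x + α * θ₁ + β * θ₂) * (γ * x + b * θ₁ + c * θ₂) =
      (γ * x + b * θ₁ + c * θ₂) * (a * x + α * θ₁ + β * θ₂) := by
  have z_ca1 : a * x - (x * a) = 0 := by rw [ca1, sub_self]
  have z_ca2 : a * θ₁ - (θ₁ * a) = 0 := by rw [ca2, sub_self]
  have z_ca3 : a * θ₂ - (θ₂ * a) = 0 := by rw [ca3, sub_self]
  have z_cal1 : α * x - (x * α) = 0 := by rw [cα1, sub_self]
  have z_cal2 : α * θ₁ - (-(θ₁ * α)) = 0 := by rw [cα2, sub_self]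
  have z_cal3 : α * θ₂ - (-(θ₂ * α)) = 0 := by rw [cα3, sub_self]
  have z_cb1 : b * x - (x * b) = 0 := by rw [cb1, sub_self]
  have z_cb2 : b * θ₁ - (θ₁ * b) = 0 := by rw [cb2, sub_self]
  have z_cb3 : b * θ₂ - (θ₂ * b) = 0 := by rw [cb3, sub_self]
  have z_cbe1 : β * x - (x * β) = 0 := by rw [cβ1, sub_self]
  have z_cbe2 : β * θ₁ - (-(θ₁ * β)) = 0 := by rw [cβ2, sub_self]
  have z_cbe3 : β * θ₂ - (-(θ₂ * β)) = 0 := by rw [cβ3, sub_self]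
  have z_cc1 : c * x - (x * c) = 0 := by rw [cc1, sub_self]
  have z_cc2 : c * θ₁ - (θ₁ * c) = 0 := by rw [cc2, sub_self]
  have z_cc3 : c * θ₂ - (θ₂ * c) = 0 := by rw [cc3, sub_self]
  have z_cga1 : γ * x - (x * γ) = 0 := by rw [cγ1, sub_self]
  have z_cga2 : γ * θ₁ - (-(θ₁ * γ)) = 0 := by rw [cγ2, sub_self]
  have z_cga3 : γ * θ₂ - (-(θ₂ * γ)) = 0 := by rw [cγ3, sub_self]
  have z_m10 : α * c - (c * α) = 0 := by rw [m10, sub_self]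
  have z_m14 : β * γ - (-(γ * β) + h • (c * β) - h' • (γ * a) - (h * h') • (c * a)) = 0 := by rw [m14, sub_self]
  have z_m15 : β * c - ((1 - h * h') • (c * β) - h' • (γ * β + c * a)) = 0 := by rw [m15, sub_self]
  have z_m3 : a * γ - ((1 + h * h') • (γ * a) + h • (γ * β - c * a)) = 0 := by rw [m3, sub_self]
  have z_m4 : a * c - (c * a - h • (c * β) - h' • (γ * a) + (h * h') • (γ * β)) = 0 := by rw [m4, sub_self]
  have z_m9 : α * γ - (-(γ * α)) = 0 := by rw [m9, sub_self]
  have z_mb_a : b * a - (a * b) = 0 := by rw [(m33 a (by simp)), sub_self]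
  have z_mb_al : b * α - (α * b) = 0 := by rw [(m33 α (by simp)), sub_self]
  have z_mb_be : b * β - (β * b) = 0 := by rw [(m33 β (by simp)), sub_self]
  have z_r1 : x * θ₁ - (θ₁ * x) = 0 := by rw [r1, sub_self]
  have z_r2 : x * θ₂ - (θ₂ * x + h • x ^ 2) = 0 := by rw [r2, sub_self]
  have z_r3 : θ₁ * θ₂ - (-(θ₂ * θ₁)) = 0 := by rw [r3, sub_self]
  have z_r4 : θ₁ ^ 2 - ((0 : A)) = 0 := by rw [r4, sub_self]
  have z_r5 : θ₂ ^ 2 - (-(h • (θ₂ * x))) = 0 := by rw [r5, sub_self]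
  have key : (a * x + α * θ₁ + β * θ₂) * (γ * x + b * θ₁ + c * θ₂) -
      (γ * x + b * θ₁ + c * θ₂) * (a * x + α * θ₁ + β * θ₂) =
      ((1 : K)) • (γ * (a * x - (x * a)) * x) +
      ((1 : K)) • (b * (a * θ₁ - (θ₁ * a)) * x) +
      ((1 : K)) • (c * (a * θ₂ - (θ₂ * a)) * x) +
      ((1 : K)) • (γ * (α * x - (x * α)) * θ₁) +
      ((-1 : K)) • (b * (α * θ₁ - (-(θ₁ * α))) * θ₁) +
      ((-1 : K)) • (c * (α * θ₂ - (-(θ₂ * α))) * θ₁) +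
      ((-1 : K)) • (a * (b * x - (x * b)) * θ₁) +
      ((-1 : K)) • (α * (b * θ₁ - (θ₁ * b)) * θ₁) +
      ((-1 : K)) • (β * (b * θ₂ - (θ₂ * b)) * θ₁) +
      ((1 : K) * h) • (θ₂ * (β * x - (x * β)) * c) +
      (((-1 : K)/2) * h) • (c * (β * x - (x * β)) * θ₂) +
      (((-1 : K)/2) * h^2) • (c * (β * x - (x * β)) * x) +
      (((1 : K)/2) * h + ((1 : K)/2) * h^2 * h') • (c * θ₂ * (β * x - (x * β))) +
      (((-1 : K)/2) * h^2) • (c * x * (β * x - (x * β))) +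
      ((1 : K) + ((1 : K)/2) * h * h') • (γ * (β * x - (x * β)) * θ₂) +
      (((1 : K)/2) * h^2 * h') • (γ * (β * x - (x * β)) * x) +
      (((1 : K)/2) * h * h') • (γ * θ₂ * (β * x - (x * β))) +
      (((1 : K)/2) * h^2 * h') • (γ * x * (β * x - (x * β))) +
      ((-1 : K)) • (b * (β * θ₁ - (-(θ₁ * β))) * θ₂) +
      ((1 : K)) • ((β * θ₂ - (-(θ₂ * β))) * θ₂ * c) +
      ((-1 : K) * h) • ((β * θ₂ - (-(θ₂ * β))) * x * c) +
      ((-1 : K)) • (θ₂ * (β * θ₂ - (-(θ₂ * β))) * c) +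
      (((1 : K)/2) * h * h') • (c * (β * θ₂ - (-(θ₂ * β))) * θ₂) +
      (((-1 : K)/2) * h + ((-1 : K)/2) * h^2 * h') • (c * (β * θ₂ - (-(θ₂ * β))) * x) +
      ((-1 : K) + ((-1 : K)/2) * h * h') • (c * θ₂ * (β * θ₂ - (-(θ₂ * β)))) +
      (((-1 : K)/2) * h) • (c * x * (β * θ₂ - (-(θ₂ * β)))) +
      (((-1 : K)/2) * h * h') • (γ * (β * θ₂ - (-(θ₂ * β))) * x) +
      (((1 : K)/2) * h * h') • (γ * x * (β * θ₂ - (-(θ₂ * β)))) +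
      ((-1 : K)) • (a * (c * x - (x * c)) * θ₂) +
      ((-2 : K) * h) • (β * (c * x - (x * c)) * θ₂) +
      ((2 : K) * h^2) • (β * (c * x - (x * c)) * x) +
      ((2 : K) * h^2) • (β * x * (c * x - (x * c))) +
      ((-1 : K)) • (α * (c * θ₁ - (θ₁ * c)) * θ₂) +
      ((-1 : K)) • (β * (c * θ₂ - (θ₂ * c)) * θ₂) +
      ((-2 : K) * h) • (β * x * (c * θ₂ - (θ₂ * c))) +
      ((-1 : K)) • (a * (γ * x - (x * γ)) * x) +
      ((1 : K)) • (α * (γ * θ₁ - (-(θ₁ * γ))) * x) +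
      ((1 : K)) • (β * (γ * θ₂ - (-(θ₂ * γ))) * x) +
      ((1 : K)) • ((α * c - (c * α)) * θ₁ * θ₂) +
      ((-1 : K)) • ((β * γ - (-(γ * β) + h • (c * β) - h' • (γ * a) - (h * h') • (c * a))) * θ₂ * x) +
      ((1 : K)) • ((β * c - ((1 - h * h') • (c * β) - h' • (γ * β + c * a))) * θ₂ * θ₂) +
      ((2 : K) * h) • ((β * c - ((1 - h * h') • (c * β) - h' • (γ * β + c * a))) * x * θ₂) +
      ((-2 : K) * h^2) • ((β * c - ((1 - h * h') • (c * β) - h' • (γ * β + c * a))) * x * x) +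
      ((1 : K)) • ((a * γ - ((1 + h * h') • (γ * a) + h • (γ * β - c * a))) * x * x) +
      ((1 : K)) • ((a * c - (c * a - h • (c * β) - h' • (γ * a) + (h * h') • (γ * β))) * x * θ₂) +
      ((-1 : K)) • ((α * γ - (-(γ * α))) * θ₁ * x) +
      ((-1 : K)) • ((b * a - (a * b)) * θ₁ * x) +
      ((1 : K)) • ((b * α - (α * b)) * θ₁ * θ₁) +
      ((1 : K)) • ((b * β - (β * b)) * θ₁ * θ₂) +
      ((1 : K)) • (a * b * (x * θ₁ - (θ₁ * x))) +
      ((-1 : K)) • (γ * α * (x * θ₁ - (θ₁ * x))) +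
      ((-2 : K) * h) • (β * (x * θ₂ - (θ₂ * x + h • x ^ 2)) * c) +
      (((1 : K)/2) * h) • (c * (x * θ₂ - (θ₂ * x + h • x ^ 2)) * β) +
      ((1 : K) + (-2 : K) * h * h') • (c * a * (x * θ₂ - (θ₂ * x + h • x ^ 2))) +
      (((3 : K)/2) * h + (-2 : K) * h^2 * h') • (c * β * (x * θ₂ - (θ₂ * x + h • x ^ 2))) +
      (((-1 : K)/2) * h * h') • (γ * (x * θ₂ - (θ₂ * x + h • x ^ 2)) * β) +
      ((-1 : K) * h') • (γ * a * (x * θ₂ - (θ₂ * x + h • x ^ 2))) +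
      ((-1 : K) + ((-3 : K)/2) * h * h') • (γ * β * (x * θ₂ - (θ₂ * x + h • x ^ 2))) +
      ((1 : K)) • (β * b * (θ₁ * θ₂ - (-(θ₂ * θ₁)))) +
      ((1 : K)) • (c * α * (θ₁ * θ₂ - (-(θ₂ * θ₁)))) +
      ((2 : K)) • (α * b * (θ₁ ^ 2 - ((0 : A)))) +
      ((1 : K)) • ((θ₂ ^ 2 - (-(h • (θ₂ * x)))) * β * c) +
      ((-1 : K)) • (β * (θ₂ ^ 2 - (-(h • (θ₂ * x)))) * c) +
      ((1 : K) + ((1 : K)/2) * h * h') • (c * (θ₂ ^ 2 - (-(h • (θ₂ * x)))) * β) +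
      ((-1 : K) * h') • (c * a * (θ₂ ^ 2 - (-(h • (θ₂ * x))))) +
      ((1 : K) + ((-3 : K)/2) * h * h') • (c * β * (θ₂ ^ 2 - (-(h • (θ₂ * x))))) +
      ((-1 : K) * h') • (γ * β * (θ₂ ^ 2 - (-(h • (θ₂ * x))))) := by
    simp only [pow_two, mul_add, add_mul, mul_sub, sub_mul, neg_mul, mul_neg, neg_neg,
      smul_neg, neg_smul, mul_zero, zero_mul, sub_zero, smul_zero, smul_mul_assoc,
      mul_smul_comm, smul_add, smul_sub, smul_smul, mul_assoc]
    module
  rw [z_ca1, z_ca2, z_ca3, z_cal1, z_cal2, z_cal3, z_cb1, z_cb2, z_cb3, z_cbe1, z_cbe2, z_cbe3, z_cc1, z_cc2, z_cc3, z_cga1, z_cga2, z_cga3, z_m10, z_m14, z_m15, z_m3, z_m4, z_m9, z_mb_a, z_mb_al, z_mb_be, z_r1, z_r2, z_r3, z_r4, z_r5] at key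
  simp only [mul_zero, zero_mul, smul_zero, add_zero, zero_add] at key
  exact sub_eq_zero.mp key
end
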